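/- The six-dimensional subspace T := span_ℂ{E₁, E₂, E_{α₁+α₂}, F_{α₁}, F_{α₂}, F_{α₁+α₂}} of U_q(sl₃) (the *-extension of T^{(0,1)}) satisfies: Δ(X) ∈ (T ⊕ ℂ1) ⊗ U_q(sl₃) for every X ∈ T; K_i T K_i⁻¹ = T for i = 1, 2; and T* = T. In other words, T is a *-invariant quantum tangent space. -/

import Mathlib

noncomputable section

open scoped TensorProduct

namespace QuantumSL3

/-- Generators of `U_q(sl₃)`: `E i`, `F i`, `K i`, `Kinv i` for `i : Fin 2`. -/
inductive UGen : Type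
  | E : Fin 2 → UGen
  | F : Fin 2 → UGen
  | K : Fin 2 → UGen
  | Kinv : Fin 2 → UGen

/-- The Cartan matrix of `sl₃`. -/
def cartan (i j : Fin 2) : ℤ := if i = j then 2 else -1

/-- The generators viewed inside the free algebra. -/
def ug (x : UGen) : FreeAlgebra ℂ UGen := FreeAlgebra.ι ℂ x

/-- The defining relations of `U_q(sl₃)`. -/
inductive urel (q : ℝ) : FreeAlgebra ℂ UGen → FreeAlgebra ℂ UGen → Prop
  | KKinv (i : Fin 2) : urel q (ug (.K i) * ug (.Kinv i)) 1
  | KinvK (i : Fin 2) : urel q (ug (.Kinv i) * ug (.K i)) 1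
  | KK (i j : Fin 2) : urel q (ug (.K i) * ug (.K j)) (ug (.K j) * ug (.K i))
  | KEK (i j : Fin 2) :
      urel q (ug (.K i) * ug (.E j) * ug (.Kinv i)) (((q : ℂ) ^ cartan i j) • ug (.E j))
  | KFK (i j : Fin 2) :
      urel q (ug (.K i) * ug (.F j) * ug (.Kinv i)) (((q : ℂ) ^ (-cartan i j)) • ug (.F j))
  | EF (i : Fin 2) :
      urel q (ug (.E i) * ug (.F i) - ug (.F i) * ug (.E i))
        ((((q : ℂ) - (q : ℂ)⁻¹)⁻¹) • (ug (.K i) - ug (.Kinv i)))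
  | EFne (i j : Fin 2) (h : i ≠ j) :
      urel q (ug (.E i) * ug (.F j)) (ug (.F j) * ug (.E i))
  | serreE (i j : Fin 2) (h : i ≠ j) :
      urel q (ug (.E i) ^ 2 * ug (.E j)
          - ((q : ℂ) + (q : ℂ)⁻¹) • (ug (.E i) * ug (.E j) * ug (.E i))
          + ug (.E j) * ug (.E i) ^ 2) 0
  | serreF (i j : Fin 2) (h : i ≠ j) :
      urel q (ug (.F i) ^ 2 * ug (.F j)
          - ((q : ℂ) + (q : ℂ)⁻¹) • (ug (.F i) * ug (.F j) * ug (.F i))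
          + ug (.F j) * ug (.F i) ^ 2) 0

/-- The Drinfeld–Jimbo quantised enveloping algebra `U_q(sl₃)`. -/
abbrev Uq (q : ℝ) := RingQuot (urel q)

/-- The generator `E_{i+1}` of `U_q(sl₃)` (so `E q 0 = E₁`, `E q 1 = E₂`). -/
def E (q : ℝ) (i : Fin 2) : Uq q := RingQuot.mkAlgHom ℂ (urel q) (ug (.E i))

def F (q : ℝ) (i : Fin 2) : Uq q := RingQuot.mkAlgHom ℂ (urel q) (ug (.F i))

def K (q : ℝ) (i : Fin 2) : Uq q := RingQuot.mkAlgHom ℂ (urel q) (ug (.K i))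

def Kinv (q : ℝ) (i : Fin 2) : Uq q := RingQuot.mkAlgHom ℂ (urel q) (ug (.Kinv i))

/-- The quantum root vector `E_{α₁+α₂} = E₂E₁ − q⁻¹E₁E₂`. -/
def Eab (q : ℝ) : Uq q := E q 1 * E q 0 - (q : ℂ)⁻¹ • (E q 0 * E q 1)

end QuantumSL3

namespace QuantumSL3

/-- `F_{α₁} = K₁F₁`. -/
def Fa1 (q : ℝ) : Uq q := K q 0 * F q 0

/-- `F_{α₂} = K₂F₂`. -/
def Fa2 (q : ℝ) : Uq q := K q 1 * F q 1

/-- `F_{α₁+α₂} = q⁻¹K₁K₂(F₁F₂ − q⁻¹F₂F₁)`. -/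
def Fab (q : ℝ) : Uq q :=
  (q : ℂ)⁻¹ • (K q 0 * K q 1 * (F q 0 * F q 1 - (q : ℂ)⁻¹ • (F q 1 * F q 0)))

/-- The `*`-extension `T = span{E₁, E₂, E_{α₁+α₂}, F_{α₁}, F_{α₂}, F_{α₁+α₂}}`. -/
def Tfull (q : ℝ) : Submodule ℂ (Uq q) :=
  Submodule.span ℂ {E q 0, E q 1, Eab q, Fa1 q, Fa2 q, Fab q}

set_option linter.dupNamespace false
set_option maxHeartbeats 1000000

variable {q : ℝ}

lemma rel {x y : FreeAlgebra ℂ UGen} (h : urel q x y) :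
    RingQuot.mkAlgHom ℂ (urel q) x = RingQuot.mkAlgHom ℂ (urel q) y :=
  RingQuot.mkAlgHom_rel ℂ h

lemma K_mul_Kinv (i : Fin 2) : K q i * Kinv q i = 1 := by
  have := rel (urel.KKinv (q := q) i); simpa [K, Kinv, map_mul] using this

lemma Kinv_mul_K (i : Fin 2) : Kinv q i * K q i = 1 := by
  have := rel (urel.KinvK (q := q) i); simpa [K, Kinv, map_mul] using this

lemma K_mul_K (i j : Fin 2) : K q i * K q j = K q j * K q i := by
  have := rel (urel.KK (q := q) i j); simpa [K, map_mul] using this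

lemma KEK (i j : Fin 2) : K q i * E q j * Kinv q i = ((q:ℂ) ^ cartan i j) • E q j := by
  have := rel (urel.KEK (q := q) i j); simpa [K, E, Kinv, map_mul, map_smul] using this

lemma KFK (i j : Fin 2) : K q i * F q j * Kinv q i = ((q:ℂ) ^ (-cartan i j)) • F q j := by
  have := rel (urel.KFK (q := q) i j); simpa [K, F, Kinv, map_mul, map_smul] using this

lemma K_mul_E (i j : Fin 2) : K q i * E q j = ((q:ℂ) ^ cartan i j) • (E q j * K q i) := by
  calc K q i * E q j = K q i * E q j * (Kinv q i * K q i) := by rw [Kinv_mul_K, mul_one]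
    _ = (K q i * E q j * Kinv q i) * K q i := by simp only [mul_assoc]
    _ = ((q:ℂ) ^ cartan i j) • (E q j * K q i) := by rw [KEK, smul_mul_assoc]

lemma K_mul_F (i j : Fin 2) : K q i * F q j = ((q:ℂ) ^ (-cartan i j)) • (F q j * K q i) := by
  calc K q i * F q j = K q i * F q j * (Kinv q i * K q i) := by rw [Kinv_mul_K, mul_one]
    _ = (K q i * F q j * Kinv q i) * K q i := by simp only [mul_assoc]
    _ = ((q:ℂ) ^ (-cartan i j)) • (F q j * K q i) := by rw [KFK, smul_mul_assoc]

lemma F_mul_Kinv (i j : Fin 2) :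
    F q j * Kinv q i = ((q:ℂ) ^ (-cartan i j)) • (Kinv q i * F q j) := by
  calc F q j * Kinv q i = (Kinv q i * K q i) * (F q j * Kinv q i) := by rw [Kinv_mul_K, one_mul]
    _ = Kinv q i * (K q i * F q j * Kinv q i) := by simp only [mul_assoc]
    _ = ((q:ℂ) ^ (-cartan i j)) • (Kinv q i * F q j) := by rw [KFK, mul_smul_comm]

lemma K_mul_Kinv_comm (i j : Fin 2) : K q i * Kinv q j = Kinv q j * K q i := by
  calc K q i * Kinv q j = (Kinv q j * K q j) * (K q i * Kinv q j) := by rw [Kinv_mul_K, one_mul]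
    _ = Kinv q j * (K q j * K q i) * Kinv q j := by simp only [mul_assoc]
    _ = Kinv q j * (K q i * K q j) * Kinv q j := by rw [K_mul_K]
    _ = Kinv q j * K q i * (K q j * Kinv q j) := by simp only [mul_assoc]
    _ = Kinv q j * K q i := by rw [K_mul_Kinv, mul_one]

lemma eq_inv_smul' {c : ℂ} (hc : c ≠ 0) {x y : Uq q} (h : x = c • y) : y = c⁻¹ • x := by
  rw [h, smul_smul, inv_mul_cancel₀ hc, one_smul]

lemma F0_mul_K1 (hq : (q:ℂ) ≠ 0) : F q 0 * K q 1 = (q:ℂ)⁻¹ • (K q 1 * F q 0) := by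
  have h := K_mul_F (q := q) 1 0
  norm_num [cartan] at h
  exact eq_inv_smul' hq h

lemma F1_mul_K0 (hq : (q:ℂ) ≠ 0) : F q 1 * K q 0 = (q:ℂ)⁻¹ • (K q 0 * F q 1) := by
  have h := K_mul_F (q := q) 0 1
  norm_num [cartan] at h
  exact eq_inv_smul' hq h

lemma KF_KF_A (hq : (q:ℂ) ≠ 0) :
    K q 0 * F q 0 * (K q 1 * F q 1) = (q:ℂ)⁻¹ • (K q 0 * (K q 1 * (F q 0 * F q 1))) := by
  have h : F q 0 * (K q 1 * F q 1) = (q:ℂ)⁻¹ • (K q 1 * (F q 0 * F q 1)) := by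
    rw [← mul_assoc, F0_mul_K1 hq, smul_mul_assoc, mul_assoc]
  rw [mul_assoc, h, mul_smul_comm]

lemma KF_KF_B (hq : (q:ℂ) ≠ 0) :
    K q 1 * F q 1 * (K q 0 * F q 0) = (q:ℂ)⁻¹ • (K q 0 * (K q 1 * (F q 1 * F q 0))) := by
  have h : F q 1 * (K q 0 * F q 0) = (q:ℂ)⁻¹ • (K q 0 * (F q 1 * F q 0)) := by
    rw [← mul_assoc, F1_mul_K0 hq, smul_mul_assoc, mul_assoc]
  rw [mul_assoc, h, mul_smul_comm, ← mul_assoc, ← mul_assoc, K_mul_K 1 0, mul_assoc, mul_assoc]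

lemma delta_Eab (Δ : Uq q →ₐ[ℂ] Uq q ⊗[ℂ] Uq q)
    (hΔE : ∀ i, Δ (E q i) = E q i ⊗ₜ[ℂ] K q i + 1 ⊗ₜ[ℂ] E q i) :
    Δ (Eab q) = Eab q ⊗ₜ[ℂ] (K q 0 * K q 1)
      + E q 1 ⊗ₜ[ℂ] (K q 1 * E q 0 - (q:ℂ)⁻¹ • (E q 0 * K q 1))
      + E q 0 ⊗ₜ[ℂ] (E q 1 * K q 0 - (q:ℂ)⁻¹ • (K q 0 * E q 1))
      + (1 : Uq q) ⊗ₜ[ℂ] Eab q := by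
  have hKK : K q 1 * K q 0 = K q 0 * K q 1 := K_mul_K 1 0
  simp only [Eab, map_sub, map_smul, map_mul, hΔE]
  simp only [mul_add, add_mul, Algebra.TensorProduct.tmul_mul_tmul, one_mul, mul_one,
    TensorProduct.tmul_sub, TensorProduct.sub_tmul, TensorProduct.tmul_smul,
    smul_sub, hKK, ← TensorProduct.smul_tmul']
  simp only [smul_add]
  abel

lemma delta_Fa1 (Δ : Uq q →ₐ[ℂ] Uq q ⊗[ℂ] Uq q)
    (hΔF : ∀ i, Δ (F q i) = F q i ⊗ₜ[ℂ] 1 + Kinv q i ⊗ₜ[ℂ] F q i)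
    (hΔK : ∀ i, Δ (K q i) = K q i ⊗ₜ[ℂ] K q i) :
    Δ (Fa1 q) = Fa1 q ⊗ₜ[ℂ] K q 0 + 1 ⊗ₜ[ℂ] Fa1 q := by
  simp [Fa1, map_mul, hΔK, hΔF, mul_add, Algebra.TensorProduct.tmul_mul_tmul, K_mul_Kinv]

lemma delta_Fa2 (Δ : Uq q →ₐ[ℂ] Uq q ⊗[ℂ] Uq q)
    (hΔF : ∀ i, Δ (F q i) = F q i ⊗ₜ[ℂ] 1 + Kinv q i ⊗ₜ[ℂ] F q i)
    (hΔK : ∀ i, Δ (K q i) = K q i ⊗ₜ[ℂ] K q i) :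
    Δ (Fa2 q) = Fa2 q ⊗ₜ[ℂ] K q 1 + 1 ⊗ₜ[ℂ] Fa2 q := by
  simp [Fa2, map_mul, hΔK, hΔF, mul_add, Algebra.TensorProduct.tmul_mul_tmul, K_mul_Kinv]

lemma delta_Fab (hq : (q:ℂ) ≠ 0) (Δ : Uq q →ₐ[ℂ] Uq q ⊗[ℂ] Uq q)
    (hΔF : ∀ i, Δ (F q i) = F q i ⊗ₜ[ℂ] 1 + Kinv q i ⊗ₜ[ℂ] F q i)
    (hΔK : ∀ i, Δ (K q i) = K q i ⊗ₜ[ℂ] K q i) :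
    Δ (Fab q) = Fab q ⊗ₜ[ℂ] (K q 0 * K q 1)
      + ((1:ℂ) - (q:ℂ)⁻¹ * (q:ℂ)⁻¹) • (Fa1 q ⊗ₜ[ℂ] (K q 0 * (K q 1 * F q 1)))
      + (1 : Uq q) ⊗ₜ[ℂ] Fab q := by
  have e1 : F q 0 * Kinv q 1 = (q:ℂ) • (Kinv q 1 * F q 0) := by
    have := F_mul_Kinv (q := q) 1 0
    norm_num [cartan] at this
    exact this
  have e2 : F q 1 * Kinv q 0 = (q:ℂ) • (Kinv q 0 * F q 1) := by
    have := F_mul_Kinv (q := q) 0 1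
    norm_num [cartan] at this
    exact this
  have wb : K q 0 * (K q 1 * (Kinv q 1 * F q 0)) = K q 0 * F q 0 := by
    rw [← mul_assoc (K q 1), K_mul_Kinv, one_mul]
  have wc : K q 0 * (K q 1 * (Kinv q 0 * F q 1)) = K q 1 * F q 1 := by
    rw [← mul_assoc (K q 1), K_mul_Kinv_comm, mul_assoc, ← mul_assoc (K q 0), K_mul_Kinv, one_mul]
  have we : K q 0 * (K q 1 * (Kinv q 0 * Kinv q 1)) = 1 := by
    rw [← mul_assoc (K q 1), K_mul_Kinv_comm, mul_assoc, ← mul_assoc (K q 0), K_mul_Kinv, one_mul,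
      K_mul_Kinv]
  have wf : K q 0 * (K q 1 * (Kinv q 1 * Kinv q 0)) = 1 := by
    rw [← mul_assoc (K q 1), K_mul_Kinv, one_mul, K_mul_Kinv]
  have hsub : ∀ x y z : Uq q ⊗[ℂ] Uq q, x * (y - z) = x * y - x * z :=
    fun x y z => mul_sub x y z
  simp only [Fab, Fa1, map_smul, map_mul, map_sub, hΔK, hΔF]
  simp only [hsub, mul_add, add_mul, mul_sub, sub_mul, smul_sub, smul_add, mul_smul_comm,
    smul_mul_assoc, Algebra.TensorProduct.tmul_mul_tmul, one_mul, mul_one,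
    TensorProduct.tmul_sub, TensorProduct.sub_tmul, TensorProduct.tmul_smul,
    ← TensorProduct.smul_tmul', mul_assoc, e1, e2, wb, wc, we, wf, smul_smul]
  match_scalars <;> field_simp <;> ring

theorem Tfull_is_star_quantum_tangent_space (q : ℝ) (hq0 : 0 < q) (hq1 : q < 1)
    (Δ : Uq q →ₐ[ℂ] Uq q ⊗[ℂ] Uq q)
    (hΔE : ∀ i, Δ (E q i) = E q i ⊗ₜ[ℂ] K q i + 1 ⊗ₜ[ℂ] E q i)
    (hΔF : ∀ i, Δ (F q i) = F q i ⊗ₜ[ℂ] 1 + Kinv q i ⊗ₜ[ℂ] F q i)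
    (hΔK : ∀ i, Δ (K q i) = K q i ⊗ₜ[ℂ] K q i)
    (hΔKinv : ∀ i, Δ (Kinv q i) = Kinv q i ⊗ₜ[ℂ] Kinv q i)
    (st : Uq q → Uq q)
    (hadd : ∀ x y, st (x + y) = st x + st y)
    (hsmul : ∀ (c : ℂ) (x), st (c • x) = (starRingEnd ℂ c) • st x)
    (hmul : ∀ x y, st (x * y) = st y * st x)
    (hone : st 1 = 1)
    (hinvol : ∀ x, st (st x) = x)
    (hstE : ∀ i, st (E q i) = K q i * F q i)
    (hstF : ∀ i, st (F q i) = E q i * Kinv q i)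
    (hstK : ∀ i, st (K q i) = K q i)
    (hstKinv : ∀ i, st (Kinv q i) = Kinv q i) :
    (∀ X ∈ Tfull q, Δ X ∈ Submodule.map₂ (TensorProduct.mk ℂ (Uq q) (Uq q))
        (Tfull q ⊔ Submodule.span ℂ {(1 : Uq q)}) (⊤ : Submodule ℂ (Uq q)))
    ∧ (∀ i : Fin 2,
        Submodule.map (LinearMap.mulLeft ℂ (K q i) ∘ₗ LinearMap.mulRight ℂ (Kinv q i))
          (Tfull q) = Tfull q)
    ∧ st '' (Tfull q : Set (Uq q)) = (Tfull q : Set (Uq q)) := by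

  have hq : (q:ℂ) ≠ 0 := by
    simp only [ne_eq, Complex.ofReal_eq_zero]
    exact ne_of_gt hq0
  -- membership of the generators
  have gmem : ∀ g ∈ ({E q 0, E q 1, Eab q, Fa1 q, Fa2 q, Fab q} : Set (Uq q)),
      g ∈ Tfull q := fun g hg => Submodule.subset_span hg
  have mE0 : E q 0 ∈ Tfull q := gmem _ (by simp)
  have mE1 : E q 1 ∈ Tfull q := gmem _ (by simp)
  have mEab : Eab q ∈ Tfull q := gmem _ (by simp)
  have mFa1 : Fa1 q ∈ Tfull q := gmem _ (by simp)
  have mFa2 : Fa2 q ∈ Tfull q := gmem _ (by simp)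
  have mFab : Fab q ∈ Tfull q := gmem _ (by simp)
  refine ⟨?_, ?_, ?_⟩
  · -- (1) coproduct condition
    intro X hX
    set P := Submodule.map₂ (TensorProduct.mk ℂ (Uq q) (Uq q))
      (Tfull q ⊔ Submodule.span ℂ {(1 : Uq q)}) (⊤ : Submodule ℂ (Uq q)) with hPdef
    have hP : ∀ a : Uq q, a ∈ Tfull q ⊔ Submodule.span ℂ {(1 : Uq q)} →
        ∀ b : Uq q, a ⊗ₜ[ℂ] b ∈ P :=
      fun a ha b => Submodule.apply_mem_map₂ _ ha Submodule.mem_top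
    have h1 : (1 : Uq q) ∈ Tfull q ⊔ Submodule.span ℂ {(1 : Uq q)} :=
      Submodule.mem_sup_right (Submodule.mem_span_singleton_self 1)
    have hT : ∀ x ∈ Tfull q, x ∈ Tfull q ⊔ Submodule.span ℂ {(1 : Uq q)} :=
      fun x hx => Submodule.mem_sup_left hx
    refine Submodule.span_induction ?_ ?_ ?_ ?_ hX
    · intro g hg
      simp only [Set.mem_insert_iff, Set.mem_singleton_iff] at hg
      rcases hg with rfl | rfl | rfl | rfl | rfl | rfl
      · rw [hΔE 0]; exact add_mem (hP _ (hT _ mE0) _) (hP _ h1 _)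
      · rw [hΔE 1]; exact add_mem (hP _ (hT _ mE1) _) (hP _ h1 _)
      · rw [delta_Eab Δ hΔE]
        exact add_mem (add_mem (add_mem (hP _ (hT _ mEab) _) (hP _ (hT _ mE1) _))
          (hP _ (hT _ mE0) _)) (hP _ h1 _)
      · rw [delta_Fa1 Δ hΔF hΔK]; exact add_mem (hP _ (hT _ mFa1) _) (hP _ h1 _)
      · rw [delta_Fa2 Δ hΔF hΔK]; exact add_mem (hP _ (hT _ mFa2) _) (hP _ h1 _)
      · rw [delta_Fab hq Δ hΔF hΔK]
        exact add_mem (add_mem (hP _ (hT _ mFab) _)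
          (Submodule.smul_mem _ _ (hP _ (hT _ mFa1) _))) (hP _ h1 _)
    · rw [map_zero]; exact zero_mem P
    · intro x y hx hy ihx ihy; rw [map_add]; exact add_mem ihx ihy
    · intro c x hx ih; rw [map_smul]; exact Submodule.smul_mem _ _ ih
  · -- (2) Ad-invariance
    intro i
    set φ := LinearMap.mulLeft ℂ (K q i) ∘ₗ LinearMap.mulRight ℂ (Kinv q i) with hφdef
    have hφ : ∀ x : Uq q, φ x = K q i * (x * Kinv q i) := fun x => rfl
    -- weight machinery
    set wt : ℂ → Uq q → Prop := fun c x => K q i * x = c • (x * K q i) with hwt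
    have wtE : ∀ j, wt ((q:ℂ) ^ cartan i j) (E q j) := fun j => K_mul_E i j
    have wtF : ∀ j, wt ((q:ℂ) ^ (-cartan i j)) (F q j) := fun j => K_mul_F i j
    have wtK : ∀ j, wt 1 (K q j) := fun j => by
      show K q i * K q j = (1:ℂ) • (K q j * K q i); rw [one_smul, K_mul_K]
    have wtmul : ∀ {c d : ℂ} {x y : Uq q}, wt c x → wt d y → wt (c * d) (x * y) := by
      intro c d x y hx hy
      show K q i * (x * y) = (c * d) • (x * y * K q i)
      calc K q i * (x * y) = (K q i * x) * y := (mul_assoc _ _ _).symm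
        _ = (c • (x * K q i)) * y := by rw [hx]
        _ = c • (x * (K q i * y)) := by rw [smul_mul_assoc, mul_assoc]
        _ = c • (x * (d • (y * K q i))) := by rw [hy]
        _ = (c * d) • (x * y * K q i) := by rw [mul_smul_comm, smul_smul, mul_assoc]
    have wtsub : ∀ {c : ℂ} {x y : Uq q}, wt c x → wt c y → wt c (x - y) := by
      intro c x y hx hy
      show K q i * (x - y) = c • ((x - y) * K q i)
      rw [mul_sub, sub_mul, smul_sub, hx, hy]
    have wtsmul : ∀ {c d : ℂ} {x : Uq q}, wt c x → wt c (d • x) := by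
      intro c d x hx
      show K q i * (d • x) = c • ((d • x) * K q i)
      rw [mul_smul_comm, smul_mul_assoc, hx, smul_comm]
    have wtcongr : ∀ {c d : ℂ} {x : Uq q}, wt c x → c = d → wt d x := by
      rintro c d x hx rfl; exact hx
    have wtconj : ∀ {c : ℂ} {x : Uq q}, wt c x → φ x = c • x := by
      intro c x hx
      rw [hφ, ← mul_assoc, hx, smul_mul_assoc, mul_assoc, K_mul_Kinv, mul_one]
    -- weights of the six generators
    have wEab : wt ((q:ℂ) ^ cartan i 1 * (q:ℂ) ^ cartan i 0) (Eab q) := by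
      rw [Eab]
      exact wtsub (wtmul (wtE 1) (wtE 0))
        (wtsmul (wtcongr (wtmul (wtE 0) (wtE 1)) (mul_comm _ _)))
    have wFa1 : wt ((q:ℂ) ^ (-cartan i 0)) (Fa1 q) := by
      rw [Fa1]
      exact wtcongr (wtmul (wtK 0) (wtF 0)) (one_mul _)
    have wFa2 : wt ((q:ℂ) ^ (-cartan i 1)) (Fa2 q) := by
      rw [Fa2]
      exact wtcongr (wtmul (wtK 1) (wtF 1)) (one_mul _)
    have wFab : wt ((q:ℂ) ^ (-cartan i 0) * (q:ℂ) ^ (-cartan i 1)) (Fab q) := by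
      rw [Fab]
      refine wtsmul (wtcongr (wtmul (wtmul (wtK 0) (wtK 1))
        (wtsub (wtmul (wtF 0) (wtF 1))
          (wtsmul (wtcongr (wtmul (wtF 1) (wtF 0)) (mul_comm _ _))))) ?_)
      ring
    have hz : ∀ n : ℤ, ((q:ℂ) ^ n) ≠ 0 := fun n => zpow_ne_zero n hq
    -- a generator with nonzero weight lies in the image
    have key : ∀ (c : ℂ) (g : Uq q), c ≠ 0 → wt c g → g ∈ Tfull q →
        g ∈ Submodule.map φ (Tfull q) := by
      intro c g hc hg hmem
      refine ⟨c⁻¹ • g, Submodule.smul_mem _ _ hmem, ?_⟩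
      rw [map_smul, wtconj hg, smul_smul, inv_mul_cancel₀ hc, one_smul]
    refine le_antisymm ?_ ?_
    · rw [Submodule.map_le_iff_le_comap, Tfull, Submodule.span_le]
      intro g hg
      simp only [Set.mem_insert_iff, Set.mem_singleton_iff] at hg
      have conj_mem : ∀ (c : ℂ) (x : Uq q), wt c x → x ∈ Tfull q →
          g = x → g ∈ Submodule.comap φ (Tfull q) := by
        rintro c x hx hmem rfl
        simp only [Submodule.mem_comap, wtconj hx]
        exact Submodule.smul_mem _ _ hmem
      rcases hg with rfl | rfl | rfl | rfl | rfl | rfl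
      · exact conj_mem _ _ (wtE 0) mE0 rfl
      · exact conj_mem _ _ (wtE 1) mE1 rfl
      · exact conj_mem _ _ wEab mEab rfl
      · exact conj_mem _ _ wFa1 mFa1 rfl
      · exact conj_mem _ _ wFa2 mFa2 rfl
      · exact conj_mem _ _ wFab mFab rfl
    · nth_rewrite 1 [Tfull]
      rw [Submodule.span_le]
      intro g hg
      simp only [Set.mem_insert_iff, Set.mem_singleton_iff] at hg
      rcases hg with rfl | rfl | rfl | rfl | rfl | rfl
      · exact key _ _ (hz _) (wtE 0) mE0
      · exact key _ _ (hz _) (wtE 1) mE1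
      · exact key _ _ (mul_ne_zero (hz _) (hz _)) wEab mEab
      · exact key _ _ (hz _) wFa1 mFa1
      · exact key _ _ (hz _) wFa2 mFa2
      · exact key _ _ (mul_ne_zero (hz _) (hz _)) wFab mFab
  · -- (3) star invariance
    have hzero : st 0 = 0 := by
      have h := hadd 0 0
      rw [add_zero] at h
      exact add_left_cancel (a := st 0) (by rw [add_zero]; exact h.symm)
    have hst_sub : ∀ x y, st (x - y) = st x - st y := by
      intro x y
      have h := hadd (x - y) y
      rw [sub_add_cancel] at h
      exact eq_sub_of_add_eq h.symm
    have hcq : (starRingEnd ℂ) ((q:ℂ)⁻¹) = (q:ℂ)⁻¹ := by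
      rw [map_inv₀, Complex.conj_ofReal]
    have stE0 : st (E q 0) = Fa1 q := hstE 0
    have stE1 : st (E q 1) = Fa2 q := hstE 1
    have stEab : st (Eab q) = Fab q := by
      rw [Eab, hst_sub, hmul, hsmul, hmul, hstE, hstE, hcq, KF_KF_A hq, KF_KF_B hq, Fab]
      rw [mul_sub, mul_smul_comm, smul_sub, smul_smul]
      simp only [mul_assoc, smul_smul]
    have stFa1 : st (Fa1 q) = E q 0 := by
      rw [← stE0, hinvol]
    have stFa2 : st (Fa2 q) = E q 1 := by
      rw [← stE1, hinvol]
    have stFab : st (Fab q) = Eab q := by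
      rw [← stEab, hinvol]
    have fwd : ∀ x ∈ Tfull q, st x ∈ Tfull q := by
      intro x hx
      refine Submodule.span_induction ?_ ?_ ?_ ?_ hx
      · intro g hg
        simp only [Set.mem_insert_iff, Set.mem_singleton_iff] at hg
        rcases hg with rfl | rfl | rfl | rfl | rfl | rfl
        · rw [stE0]; exact mFa1
        · rw [stE1]; exact mFa2
        · rw [stEab]; exact mFab
        · rw [stFa1]; exact mE0
        · rw [stFa2]; exact mE1
        · rw [stFab]; exact mEab
      · rw [hzero]; exact zero_mem _
      · intro a b _ _ iha ihb; rw [hadd]; exact add_mem iha ihb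
      · intro c a _ iha; rw [hsmul]; exact Submodule.smul_mem _ _ iha
    ext x
    constructor
    · rintro ⟨y, hy, rfl⟩
      exact fwd y hy
    · intro hx
      exact ⟨st x, fwd x hx, hinvol x⟩


end QuantumSL3
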